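/- Let R > 0 and let f : (-R, R) → ℝ be an (M₁, M₂)-diffeomorphism. Let d ≥ 1 be an integer and let 0 < γ₀ < γ₁ < ⋯ < γ_d = 1 be scale parameters. For each 1 ≤ k ≤ d define Δ_k := f_[γ_k] ∘ f_[γ_{k−1}]⁻¹ and ψ_k(x) := Δ_k(x) − x, where f_[γ](x) := f(γx)/γ. Then ψ_k is C₂-smooth on its domain, i.e., its second derivative satisfies |ψ_k''(x)| ≤ C₂ for all x, where C₂ := M₂·(M₁² + M₁). -/

import Mathlib

open Set

lemma open_image_of_injOn {a b : ℝ} {f : ℝ → ℝ}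
    (hc : ContinuousOn f (Ioo a b)) (hi : InjOn f (Ioo a b)) :
    IsOpen (f '' Ioo a b) := by
  rw [isOpen_iff_mem_nhds]
  rintro z ⟨x, ⟨hx1, hx2⟩, rfl⟩
  set δ := min (x - a) (b - x) / 2 with hδdef
  have hδ : 0 < δ := by
    have : 0 < min (x - a) (b - x) := lt_min (by linarith) (by linarith)
    positivity
  have hδa : δ < x - a := by
    have := min_le_left (x - a) (b - x); simp only [hδdef]; linarith
  have hδb : δ < b - x := by
    have := min_le_right (x - a) (b - x); simp only [hδdef]; linarith
  have hsub : Icc (x - δ) (x + δ) ⊆ Ioo a b := by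
    rintro y ⟨h1, h2⟩; exact ⟨by linarith, by linarith⟩
  have hle : x - δ ≤ x + δ := by linarith
  have hcI : ContinuousOn f (Icc (x - δ) (x + δ)) := hc.mono hsub
  have hiI : InjOn f (Icc (x - δ) (x + δ)) := hi.mono hsub
  have hm1 : x - δ ∈ Icc (x - δ) (x + δ) := ⟨le_refl _, by linarith⟩
  have hm2 : x + δ ∈ Icc (x - δ) (x + δ) := ⟨by linarith, le_refl _⟩
  have hmx : x ∈ Icc (x - δ) (x + δ) := ⟨by linarith, by linarith⟩
  rcases hcI.strictMonoOn_of_injOn_Icc' hle hiI with hm | hm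
  · have h1 : f (x - δ) < f x := hm hm1 hmx (by linarith)
    have h2 : f x < f (x + δ) := hm hmx hm2 (by linarith)
    have hIV := intermediate_value_Icc hle hcI
    refine Filter.mem_of_superset (Ioo_mem_nhds h1 h2) ?_
    intro w hw
    obtain ⟨u, hu, huw⟩ := hIV (Ioo_subset_Icc_self hw)
    exact ⟨u, hsub hu, huw⟩
  · have h1 : f (x + δ) < f x := hm hmx hm2 (by linarith)
    have h2 : f x < f (x - δ) := hm hm1 hmx (by linarith)
    have hIV := intermediate_value_Icc' hle hcI
    refine Filter.mem_of_superset (Ioo_mem_nhds h1 h2) ?_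
    intro w hw
    obtain ⟨u, hu, huw⟩ := hIV (Ioo_subset_Icc_self hw)
    exact ⟨u, hsub hu, huw⟩

lemma abs_deriv_le_of_lip {s : Set ℝ} (hs : IsOpen s) {F : ℝ → ℝ} {M c : ℝ}
    (hM : 0 ≤ M) (hlip : ∀ x ∈ s, ∀ y ∈ s, |F x - F y| ≤ M * |x - y|)
    {x : ℝ} (hx : x ∈ s) (hd : HasDerivAt F c x) : |c| ≤ M := by
  have hL : LipschitzOnWith (⟨M, hM⟩ : NNReal) F s := by
    refine lipschitzOnWith_iff_dist_le_mul.mpr ?_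
    intro p hp q hq
    rw [Real.dist_eq, Real.dist_eq]; exact hlip p hp q hq
  have h := hd.hasFDerivAt.le_of_lipschitzOn (hs.mem_nhds hx) hL
  rwa [ContinuousLinearMap.norm_toSpanSingleton, Real.norm_eq_abs] at h

/-- Let `f : (-R, R) → ℝ` be an `(M₁, M₂)`-diffeomorphism (with inverse `g`,
first/second derivatives `f', f''` and `g', g''`), let `0 < γ₀ < γ₁ < ⋯ < γ_d = 1`.
For `1 ≤ k ≤ d` the rung `ψ_k(x) = f_[γ_k](f_[γ_{k-1}]⁻¹(x)) - x` of the ladder decomposition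
is `C₂`-smooth on its domain, i.e. its second derivative is bounded in absolute value by
`C₂ = M₂·(M₁² + M₁)`. -/
theorem ladder_rung_smooth
    (R M₁ M₂ : ℝ) (hR : 0 < R) (d : ℕ) (hd : 1 ≤ d)
    (γ : ℕ → ℝ) (hγ0 : 0 < γ 0) (hγmono : ∀ i, i < d → γ i < γ (i + 1)) (hγd : γ d = 1)
    (f g f' g' f'' g'' : ℝ → ℝ)
    (hgf : ∀ x ∈ Set.Ioo (-R) R, g (f x) = x)
    (hf_lip : ∀ x ∈ Set.Ioo (-R) R, ∀ y ∈ Set.Ioo (-R) R, |f x - f y| ≤ M₁ * |x - y|)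
    (hf' : ∀ x ∈ Set.Ioo (-R) R, HasDerivAt f (f' x) x)
    (hf'' : ∀ x ∈ Set.Ioo (-R) R, HasDerivAt f' (f'' x) x)
    (hf'_lip : ∀ x ∈ Set.Ioo (-R) R, ∀ y ∈ Set.Ioo (-R) R, |f' x - f' y| ≤ M₂ * |x - y|)
    (hg_lip : ∀ x ∈ f '' Set.Ioo (-R) R, ∀ y ∈ f '' Set.Ioo (-R) R, |g x - g y| ≤ M₁ * |x - y|)
    (hg' : ∀ x ∈ f '' Set.Ioo (-R) R, HasDerivAt g (g' x) x)
    (hg'' : ∀ x ∈ f '' Set.Ioo (-R) R, HasDerivAt g' (g'' x) x)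
    (hg'_lip : ∀ x ∈ f '' Set.Ioo (-R) R, ∀ y ∈ f '' Set.Ioo (-R) R,
      |g' x - g' y| ≤ M₂ * |x - y|)
    (k : ℕ) (hk1 : 1 ≤ k) (hkd : k ≤ d) :
    ∀ x ∈ (fun t => f (γ (k - 1) * t) / γ (k - 1)) '' Set.Ioo (-R) R,
      |deriv (deriv (fun y => f (γ k * (g (γ (k - 1) * y) / γ (k - 1))) / γ k - y)) x|
        ≤ M₂ * (M₁ ^ 2 + M₁) := by
  -- monotonicity of γ
  have hγle : ∀ j : ℕ, j ≤ d → ∀ i : ℕ, i ≤ j → γ i ≤ γ j := by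
    intro j
    induction j with
    | zero => intro _ i hi; interval_cases i; exact le_refl _
    | succ n ih =>
      intro hjd i hij
      rcases Nat.eq_or_lt_of_le hij with h | h
      · subst h; exact le_refl _
      · have hin : i ≤ n := Nat.lt_succ_iff.mp h
        exact le_trans (ih (by omega) i hin) (le_of_lt (hγmono n (by omega)))
  have hγpos : ∀ i : ℕ, i ≤ d → 0 < γ i := fun i hi =>
    lt_of_lt_of_le hγ0 (hγle i hi 0 (Nat.zero_le _))
  have hγ1 : ∀ i : ℕ, i ≤ d → γ i ≤ 1 := fun i hi => hγd ▸ hγle d (le_refl _) i hi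
  set a := γ (k - 1) with ha_def
  set b := γ k with hb_def
  have ha : 0 < a := hγpos _ (by omega)
  have ha1 : a ≤ 1 := hγ1 _ (by omega)
  have hb : 0 < b := hγpos _ hkd
  have hb1 : b ≤ 1 := hγ1 _ hkd
  set I := Ioo (-R) R with hI_def
  -- nonnegativity of M₁, M₂
  have h0I : (0 : ℝ) ∈ I := ⟨by linarith, hR⟩
  have hhalf : R / 2 ∈ I := ⟨by linarith, by linarith⟩
  have hM1 : 0 ≤ M₁ := by
    have h := le_trans (abs_nonneg _) (hf_lip 0 h0I (R / 2) hhalf)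
    rw [zero_sub, abs_neg, abs_of_pos (by linarith : (0:ℝ) < R / 2)] at h
    nlinarith
  have hM2 : 0 ≤ M₂ := by
    have h := le_trans (abs_nonneg _) (hf'_lip 0 h0I (R / 2) hhalf)
    rw [zero_sub, abs_neg, abs_of_pos (by linarith : (0:ℝ) < R / 2)] at h
    nlinarith
  -- basic facts about f
  have hfc : ContinuousOn f I := fun x hx => (hf' x hx).continuousAt.continuousWithinAt
  have hfinj : InjOn f I := fun x hx y hy h => by rw [← hgf x hx, ← hgf y hy, h]
  have hTopen : IsOpen (f '' I) := open_image_of_injOn hfc hfinj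
  have hIopen : IsOpen I := isOpen_Ioo
  -- scaling facts
  have hscale : ∀ t ∈ I, ∀ c : ℝ, 0 < c → c ≤ 1 → c * t ∈ I := by
    rintro t ⟨ht1, ht2⟩ c hc hc1
    constructor
    · nlinarith [mul_pos hc (show (0:ℝ) < t + R by linarith),
        mul_nonneg (show (0:ℝ) ≤ 1 - c by linarith) hR.le]
    · nlinarith [mul_pos hc (show (0:ℝ) < R - t by linarith),
        mul_nonneg (show (0:ℝ) ≤ 1 - c by linarith) hR.le]
  -- the domain S
  set S := (fun t => f (a * t) / a) '' I with hS_def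
  have hsub' : Ioo (-(a * R)) (a * R) ⊆ I := by
    rintro u ⟨hu1, hu2⟩
    have haR : a * R ≤ R := by nlinarith
    exact ⟨by linarith, by linarith⟩
  have hSeq : S = (fun w => a * w) ⁻¹' (f '' Ioo (-(a * R)) (a * R)) := by
    ext w
    simp only [hS_def, Set.mem_image, Set.mem_preimage]
    constructor
    · rintro ⟨t, ht, rfl⟩
      refine ⟨a * t, ⟨?_, ?_⟩, by field_simp⟩
      · nlinarith [ht.1]
      · nlinarith [ht.2]
    · rintro ⟨u, hu, huw⟩
      refine ⟨u / a, ⟨?_, ?_⟩, ?_⟩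
      · rw [lt_div_iff₀ ha]; linarith [hu.1]
      · rw [div_lt_iff₀ ha]; linarith [hu.2]
      · rw [show a * (u / a) = u by field_simp, huw]
        exact mul_div_cancel_left₀ w (ne_of_gt ha)
  have hSopen : IsOpen S := by
    rw [hSeq]
    exact (open_image_of_injOn (hfc.mono hsub') (hfinj.mono hsub')).preimage
      (continuous_const.mul continuous_id)
  -- membership facts for points of S
  have hmem : ∀ y ∈ S, a * y ∈ f '' I ∧ b * (g (a * y) / a) ∈ I := by
    rintro y ⟨t, ht, rfl⟩
    have hat : a * t ∈ I := hscale t ht a ha ha1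
    have h1 : a * (f (a * t) / a) = f (a * t) := by field_simp
    refine ⟨⟨a * t, hat, h1.symm⟩, ?_⟩
    rw [h1, hgf _ hat, show b * (a * t / a) = b * t by field_simp]
    exact hscale t ht b hb hb1
  -- the functions ψ and φ
  set ψ : ℝ → ℝ := fun y => f (b * (g (a * y) / a)) / b - y with hψ_def
  set φ : ℝ → ℝ := fun y => f' (b * (g (a * y) / a)) * g' (a * y) - 1 with hφ_def
  have hchain : ∀ y ∈ S,
      HasDerivAt (fun z => b * (g (a * z) / a)) (b * (g' (a * y) * a / a)) y ∧
      HasDerivAt (fun z => g' (a * z)) (g'' (a * y) * a) y := by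
    intro y hy
    obtain ⟨hay, _⟩ := hmem y hy
    have h1 : HasDerivAt (fun z : ℝ => a * z) a y := by
      simpa using (hasDerivAt_id y).const_mul a
    have h2 : HasDerivAt (fun z => g (a * z)) (g' (a * y) * a) y := by
      simpa [Function.comp_def] using (hg' _ hay).comp y h1
    have h8 : HasDerivAt (fun z => g' (a * z)) (g'' (a * y) * a) y := by
      simpa [Function.comp_def] using (hg'' _ hay).comp y h1
    exact ⟨(h2.div_const a).const_mul b, h8⟩
  have hψ' : ∀ y ∈ S, HasDerivAt ψ (φ y) y := by
    intro y hy
    obtain ⟨hay, hbt⟩ := hmem y hy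
    obtain ⟨h3, _⟩ := hchain y hy
    have h5 : HasDerivAt (fun z => f (b * (g (a * z) / a)))
        (f' (b * (g (a * y) / a)) * (b * (g' (a * y) * a / a))) y := by
      simpa [Function.comp_def] using (hf' _ hbt).comp y h3
    have h6 := (h5.div_const b).sub (hasDerivAt_id y)
    refine h6.congr_deriv ?_
    simp only [hφ_def]
    field_simp
  have hφ' : ∀ y ∈ S, HasDerivAt φ
      (b * f'' (b * (g (a * y) / a)) * (g' (a * y)) ^ 2
        + a * f' (b * (g (a * y) / a)) * g'' (a * y)) y := by
    intro y hy
    obtain ⟨hay, hbt⟩ := hmem y hy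
    obtain ⟨h3, h8⟩ := hchain y hy
    have h7 : HasDerivAt (fun z => f' (b * (g (a * z) / a)))
        (f'' (b * (g (a * y) / a)) * (b * (g' (a * y) * a / a))) y := by
      simpa [Function.comp_def] using (hf'' _ hbt).comp y h3
    have h9 := (h7.mul h8).sub_const 1
    refine h9.congr_deriv ?_
    field_simp
  -- conclusion
  intro x hx
  have e1 : Set.EqOn (deriv ψ) φ S := fun y hy => (hψ' y hy).deriv
  have e2 : deriv ψ =ᶠ[nhds x] φ := Filter.eventuallyEq_of_mem (hSopen.mem_nhds hx) e1
  rw [e2.deriv_eq, (hφ' x hx).deriv]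
  obtain ⟨hay, hbt⟩ := hmem x hx
  set A := f'' (b * (g (a * x) / a))
  set B := g' (a * x)
  set C := f' (b * (g (a * x) / a))
  set D := g'' (a * x)
  have B1 : |C| ≤ M₁ := abs_deriv_le_of_lip hIopen hM1 hf_lip hbt (hf' _ hbt)
  have B2 : |A| ≤ M₂ := abs_deriv_le_of_lip hIopen hM2 hf'_lip hbt (hf'' _ hbt)
  have B3 : |B| ≤ M₁ := abs_deriv_le_of_lip hTopen hM1 hg_lip hay (hg' _ hay)
  have B4 : |D| ≤ M₂ := abs_deriv_le_of_lip hTopen hM2 hg'_lip hay (hg'' _ hay)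
  have k1 : |b * A * B ^ 2| ≤ M₂ * M₁ ^ 2 := by
    rw [abs_mul, abs_mul, abs_of_pos hb, abs_pow]
    have hB2 : |B| ^ 2 ≤ M₁ ^ 2 := by nlinarith [abs_nonneg B]
    have h1 : |A| * |B| ^ 2 ≤ M₂ * M₁ ^ 2 := mul_le_mul B2 hB2 (by positivity) hM2
    calc b * |A| * |B| ^ 2 = b * (|A| * |B| ^ 2) := by ring
      _ ≤ 1 * (M₂ * M₁ ^ 2) := mul_le_mul hb1 h1 (by positivity) zero_le_one
      _ = M₂ * M₁ ^ 2 := one_mul _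
  have k2 : |a * C * D| ≤ M₂ * M₁ := by
    rw [abs_mul, abs_mul, abs_of_pos ha]
    have h1 : |C| * |D| ≤ M₁ * M₂ := mul_le_mul B1 B4 (abs_nonneg D) hM1
    calc a * |C| * |D| = a * (|C| * |D|) := by ring
      _ ≤ 1 * (M₁ * M₂) := mul_le_mul ha1 h1 (by positivity) zero_le_one
      _ = M₂ * M₁ := by ring
  calc |b * A * B ^ 2 + a * C * D| ≤ |b * A * B ^ 2| + |a * C * D| := abs_add_le _ _
    _ ≤ M₂ * M₁ ^ 2 + M₂ * M₁ := add_le_add k1 k2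
    _ = M₂ * (M₁ ^ 2 + M₁) := by ring
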